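/- Theorem (pathwise optimality of index policies for deteriorating rewards). Let d ≥ 1, β > 0, and for k = 1, …, d let M̲^k : [0,∞) → [0,∞) be nonincreasing, right-continuous and bounded. Let T = (T^1, …, T^d) and T̂ = (T̂^1, …, T̂^d) be allocations: all components are nondecreasing, vanish at 0, and satisfy Σ_{k=1}^d T^k(t) = Σ_{k=1}^d T̂^k(t) = t for all t ≥ 0. Suppose T̂ is an index (follow-the-leader) allocation: T̂^k right-increases at a time t (i.e., T̂^k(t') > T̂^k(t) for every t' > t) only when M̲^k(T̂^k(t)) = max_{1≤j≤d} M̲^j(T̂^j(t)). Then Σ_{k=1}^d ∫_0^∞ e^{-βt} M̲^k(T^k(t)) dT^k(t) ≤ Σ_{k=1}^d ∫_0^∞ e^{-βt} M̲^k(T̂^k(t)) dT̂^k(t), where the integrals are Lebesgue–Stieltjes integrals (the components of any such allocation are 1-Lipschitz, hence continuous). -/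

import Mathlib

open Set Filter Topology MeasureTheory
open scoped ENNReal

namespace IndexPolicyAux

lemma layer_aux (c : ℝ) :
    ∫⁻ x in Ioi (0:ℝ), (Iio c).indicator (fun _ => (1:ℝ≥0∞)) x = ENNReal.ofReal c := by
  rw [lintegral_indicator measurableSet_Iio, setLIntegral_one,
    Measure.restrict_apply measurableSet_Iio,
    show Iio c ∩ Ioi (0:ℝ) = Ioo 0 c from by rw [inter_comm]; exact Ioi_inter_Iio,
    Real.volume_Ioo, sub_zero]

lemma measure_le_of_downward (f : StieltjesFunction ℝ) (hc : Continuous f)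
    (h0 : ∀ t : ℝ, t ≤ 0 → f t = 0)
    (B : Set ℝ) (hB0 : ∀ t ∈ B, (0:ℝ) ≤ t)
    (hdc : ∀ t ∈ B, ∀ s : ℝ, 0 ≤ s → s ≤ t → s ∈ B)
    (c : ℝ≥0∞) (hbound : ∀ t ∈ B, ENNReal.ofReal (f t) ≤ c) :
    f.measure B ≤ c := by
  rcases B.eq_empty_or_nonempty with rfl | ⟨t0, ht0⟩
  · simp
  rcases eq_or_ne c ⊤ with rfl | hctop
  · exact le_top
  have hll : ∀ x : ℝ, Function.leftLim f x = f x := fun x =>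
    f.mono.continuousWithinAt_Iio_iff_leftLim_eq.1 hc.continuousWithinAt
  have hfB : ∀ t ∈ B, f t ≤ c.toReal := by
    intro t ht
    have h1 : (0:ℝ) ≤ f t := by
      have h2 := f.mono (hB0 t ht); rw [h0 0 le_rfl] at h2; exact h2
    have h3 := ENNReal.toReal_mono hctop (hbound t ht)
    rwa [ENNReal.toReal_ofReal h1] at h3
  have hIcc : ∀ r : ℝ, f r ≤ c.toReal → f.measure (Icc 0 r) ≤ c := by
    intro r hfr
    rw [f.measure_Icc, hll 0, h0 0 le_rfl, sub_zero]
    exact ENNReal.ofReal_le_of_le_toReal hfr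
  by_cases hbdd : BddAbove B
  · have hsub : B ⊆ Icc 0 (sSup B) := fun t ht => ⟨hB0 t ht, le_csSup hbdd ht⟩
    refine (measure_mono hsub).trans (hIcc _ ?_)
    refine le_of_forall_pos_le_add fun ε hε => ?_
    obtain ⟨δ, hδ, hδ'⟩ := Metric.continuous_iff.1 hc (sSup B) ε hε
    obtain ⟨t, htB, htlt⟩ := exists_lt_of_lt_csSup ⟨t0, ht0⟩ (by linarith : sSup B - δ < sSup B)
    have hts : t ≤ sSup B := le_csSup hbdd htB
    have hdist : dist t (sSup B) < δ := by
      rw [Real.dist_eq, abs_lt]; constructor <;> linarith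
    have h2 := hδ' t hdist
    rw [Real.dist_eq, abs_lt] at h2
    have h3 := hfB t htB
    have := h2.1
    have := h2.2
    linarith
  · have hall : ∀ s : ℝ, 0 ≤ s → s ∈ B := by
      intro s hs
      obtain ⟨t, htB, hst⟩ := not_bddAbove_iff.1 hbdd s
      exact hdc t htB s hs hst.le
    have hbdR : BddAbove (Set.range f) := by
      refine ⟨max c.toReal 0, ?_⟩
      rintro _ ⟨x, rfl⟩
      rcases le_or_gt x 0 with h | h
      · rw [h0 x h]; exact le_max_right _ _
      · exact le_max_of_le_left (hfB x (hall x h.le))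
    have htop : Tendsto f atTop (𝓝 (⨆ x, f x)) := tendsto_atTop_ciSup f.mono hbdR
    have hbot : Tendsto f atBot (𝓝 0) := by
      refine Tendsto.congr' ?_ tendsto_const_nhds
      filter_upwards [eventually_le_atBot (0:ℝ)] with x hx
      exact (h0 x hx).symm
    calc f.measure B ≤ f.measure univ := measure_mono (subset_univ B)
      _ = ENNReal.ofReal ((⨆ x, f x) - 0) := f.measure_univ hbot htop
      _ ≤ c := by
          rw [sub_zero]
          refine ENNReal.ofReal_le_of_le_toReal (ciSup_le fun x => ?_)
          rcases le_or_gt x 0 with h | h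
          · rw [h0 x h]; exact ENNReal.toReal_nonneg
          · exact hfB x (hall x h.le)

lemma measure_flat_null (f : StieltjesFunction ℝ) (hc : Continuous f)
    (h0 : ∀ t : ℝ, t ≤ 0 → f t = 0) :
    f.measure {t : ℝ | ∃ t', t < t' ∧ f t' = f t} = 0 := by
  have hll : ∀ x : ℝ, Function.leftLim f x = f x := fun x =>
    f.mono.continuousWithinAt_Iio_iff_leftLim_eq.1 hc.continuousWithinAt
  have hsing : ∀ a : ℝ, f.measure {a} = 0 := by
    intro a; rw [f.measure_singleton, hll, sub_self, ENNReal.ofReal_zero]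
  have hneg : f.measure (Iio 0) = 0 := by
    have hsub : Iio (0:ℝ) ⊆ ⋃ n : ℕ, Ioc (-(n+1) : ℝ) 0 := by
      intro x hx
      obtain ⟨n, hn⟩ := exists_nat_ge (-x)
      exact mem_iUnion.2 ⟨n, ⟨by push_cast; linarith, le_of_lt hx⟩⟩
    refine measure_mono_null hsub (measure_iUnion_null fun n => ?_)
    rw [f.measure_Ioc, h0 0 le_rfl, h0 _ (neg_nonpos.2 (by positivity)), sub_zero, ENNReal.ofReal_zero]
  have hcover : {t : ℝ | ∃ t', t < t' ∧ f t' = f t} ⊆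
      Iio 0 ∪ ⋃ q : ℚ, {t : ℝ | t < (q:ℝ) ∧ f t = f (q:ℝ) ∧ 0 ≤ t} := by
    rintro t ⟨t', htt', hft⟩
    rcases lt_or_ge t 0 with h | h
    · exact Or.inl h
    · refine Or.inr (mem_iUnion.2 ?_)
      obtain ⟨q, hq1, hq2⟩ := exists_rat_btwn htt'
      exact ⟨q, hq1, le_antisymm (f.mono hq1.le) (by rw [← hft]; exact f.mono hq2.le), h⟩
  refine measure_mono_null hcover (measure_union_null hneg (measure_iUnion_null fun q => ?_))
  set A := {t : ℝ | t < (q:ℝ) ∧ f t = f (q:ℝ) ∧ 0 ≤ t} with hA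
  rcases A.eq_empty_or_nonempty with h | ⟨t0, ht0⟩
  · rw [h]; exact measure_empty
  have hbdd : BddBelow A := ⟨0, fun t ht => ht.2.2⟩
  have hfa : f (sInf A) = f (q:ℝ) := by
    refine le_antisymm ?_ ?_
    · rw [← ht0.2.1]; exact f.mono (csInf_le hbdd ht0)
    · refine le_of_forall_pos_le_add fun ε hε => ?_
      obtain ⟨δ, hδ, hδ'⟩ := Metric.continuous_iff.1 hc (sInf A) ε hε
      obtain ⟨t, htA, htlt⟩ := (csInf_lt_iff hbdd ⟨t0, ht0⟩).1
        (by linarith : sInf A < sInf A + δ)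
      have hts : sInf A ≤ t := csInf_le hbdd htA
      have hdist : dist t (sInf A) < δ := by rw [Real.dist_eq, abs_lt]; constructor <;> linarith
      have h2 := hδ' t hdist
      rw [Real.dist_eq, abs_lt] at h2
      have h3 : f t = f (q:ℝ) := htA.2.1
      have := h2.1
      have := h2.2
      linarith
  have hsub : A ⊆ {sInf A} ∪ Ioc (sInf A) (q:ℝ) := by
    intro t ht
    rcases eq_or_lt_of_le (csInf_le hbdd ht) with h | h
    · exact Or.inl h.symm
    · exact Or.inr ⟨h, ht.1.le⟩
  refine measure_mono_null hsub (measure_union_null (hsing _) ?_)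
  rw [f.measure_Ioc, hfa, sub_self, ENNReal.ofReal_zero]

lemma repr_aux (β : ℝ) (hβ : 0 < β) (SU : StieltjesFunction ℝ) (U : ℝ → ℝ) (hU : Measurable U)
    (M : ℝ → ℝ) (hMa : Antitone M) :
    ∫⁻ t in Ici (0:ℝ), ENNReal.ofReal (Real.exp (-β * t) * M (U t)) ∂SU.measure
      = ∫⁻ m in Ioi (0:ℝ), ∫⁻ u in Ioi (0:ℝ),
          SU.measure ({t : ℝ | 0 ≤ t ∧ m < M (U t)} ∩ Iio (-Real.log u / β)) := by
  have hh : Measurable fun t => M (U t) := hMa.measurable.comp hU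
  set G : ℝ × ℝ → ℝ≥0∞ := fun p =>
    ENNReal.ofReal (Real.exp (-β * p.1)) *
      ({q : ℝ × ℝ | q.2 < M (U q.1)}.indicator (fun _ => (1:ℝ≥0∞)) p) with hG
  have hGmeas : Measurable G := by
    have hset : MeasurableSet {q : ℝ × ℝ | q.2 < M (U q.1)} :=
      measurableSet_lt measurable_snd (hh.comp measurable_fst)
    exact ((ENNReal.measurable_ofReal.comp
      (Real.measurable_exp.comp (measurable_fst.const_mul (-β)))).mul
      (measurable_const.indicator hset))
  have step1 : ∫⁻ t in Ici (0:ℝ), ENNReal.ofReal (Real.exp (-β * t) * M (U t)) ∂SU.measure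
      = ∫⁻ t in Ici (0:ℝ), ∫⁻ m in Ioi (0:ℝ), G (t, m) ∂volume ∂SU.measure := by
    refine lintegral_congr fun t => ?_
    rw [ENNReal.ofReal_mul (Real.exp_nonneg _), ← layer_aux (M (U t)),
      ← lintegral_const_mul' _ _ ENNReal.ofReal_ne_top]
    refine lintegral_congr fun m => ?_
    by_cases h : m < M (U t) <;> simp [hG, Set.indicator_apply, h]
  have huncurry : Function.uncurry (fun t m => G (t, m)) = G := by
    ext p; simp [Function.uncurry]
  have swap1 : ∫⁻ t in Ici (0:ℝ), ∫⁻ m in Ioi (0:ℝ), G (t, m) ∂volume ∂SU.measure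
      = ∫⁻ m in Ioi (0:ℝ), ∫⁻ t in Ici (0:ℝ), G (t, m) ∂SU.measure ∂volume :=
    lintegral_lintegral_swap (by rw [huncurry]; exact hGmeas.aemeasurable)
  rw [step1, swap1]
  refine lintegral_congr fun m => ?_
  have hA : MeasurableSet {t : ℝ | m < M (U t)} := measurableSet_lt measurable_const hh
  have inner1 : ∫⁻ t in Ici (0:ℝ), G (t, m) ∂SU.measure
      = ∫⁻ t in {t : ℝ | 0 ≤ t ∧ m < M (U t)},
          ENNReal.ofReal (Real.exp (-β * t)) ∂SU.measure := by
    have h1 : ∀ t : ℝ, G (t, m) =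
        ({t : ℝ | m < M (U t)}.indicator (fun t => ENNReal.ofReal (Real.exp (-β * t)))) t := by
      intro t
      by_cases h : m < M (U t) <;> simp [hG, Set.indicator_apply, h]
    rw [lintegral_congr h1, lintegral_indicator hA, Measure.restrict_restrict hA,
      show {t : ℝ | m < M (U t)} ∩ Ici 0 = {t : ℝ | 0 ≤ t ∧ m < M (U t)} from by
        ext t; simp only [mem_inter_iff, mem_setOf_eq, mem_Ici]; exact and_comm]
  rw [inner1]
  set B := {t : ℝ | 0 ≤ t ∧ m < M (U t)} with hBdef
  set G2 : ℝ × ℝ → ℝ≥0∞ :=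
    fun p => {q : ℝ × ℝ | q.2 < Real.exp (-β * q.1)}.indicator (fun _ => (1:ℝ≥0∞)) p with hG2
  have hG2meas : Measurable G2 :=
    measurable_const.indicator (measurableSet_lt measurable_snd
      (Real.measurable_exp.comp (measurable_fst.const_mul (-β))))
  have step2 : ∫⁻ t in B, ENNReal.ofReal (Real.exp (-β * t)) ∂SU.measure
      = ∫⁻ t in B, ∫⁻ u in Ioi (0:ℝ), G2 (t, u) ∂volume ∂SU.measure := by
    refine lintegral_congr fun t => ?_
    rw [← layer_aux (Real.exp (-β * t))]
    refine lintegral_congr fun u => ?_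
    by_cases h : u < Real.exp (-β * t) <;> simp [hG2, Set.indicator_apply, h]
  have huncurry2 : Function.uncurry (fun t u => G2 (t, u)) = G2 := by
    ext p; simp [Function.uncurry]
  have swap2 : ∫⁻ t in B, ∫⁻ u in Ioi (0:ℝ), G2 (t, u) ∂volume ∂SU.measure
      = ∫⁻ u in Ioi (0:ℝ), ∫⁻ t in B, G2 (t, u) ∂SU.measure ∂volume :=
    lintegral_lintegral_swap (by rw [huncurry2]; exact hG2meas.aemeasurable)
  rw [step2, swap2]
  refine setLIntegral_congr_fun measurableSet_Ioi (fun u hu => ?_)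
  have hu0 : (0:ℝ) < u := hu
  have hiff : ∀ t : ℝ, (u < Real.exp (-β * t)) ↔ t < -Real.log u / β := by
    intro t
    have hlog : u < Real.exp (-β * t) ↔ Real.log u < -β * t :=
      ⟨fun h => by have h2 := Real.log_lt_log hu0 h; rwa [Real.log_exp] at h2,
       fun h => by have h2 := Real.exp_lt_exp.2 h; rwa [Real.exp_log hu0] at h2⟩
    rw [lt_div_iff₀ hβ, hlog]
    constructor <;> intro h <;> linarith
  have hfin : ∀ t : ℝ, G2 (t, u) = ((Iio (-Real.log u / β)).indicator (fun _ => (1:ℝ≥0∞))) t := by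
    intro t
    simp only [hG2, Set.indicator_apply, mem_setOf_eq, mem_Iio, hiff t]
  rw [lintegral_congr hfin, lintegral_indicator measurableSet_Iio, setLIntegral_one,
    Measure.restrict_apply measurableSet_Iio, inter_comm]


end IndexPolicyAux



theorem index_policy_optimal_deteriorating
    (d : ℕ) (hd : 1 ≤ d) (β : ℝ) (hβ : 0 < β)
    (Mlow : Fin d → ℝ → ℝ)
    (hMnonneg : ∀ k, ∀ s : ℝ, 0 ≤ s → 0 ≤ Mlow k s)
    (hManti : ∀ k, AntitoneOn (Mlow k) (Ici (0:ℝ)))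
    (hMrc : ∀ k, ∀ s : ℝ, 0 ≤ s → ContinuousWithinAt (Mlow k) (Ici s) s)
    (hMbdd : ∀ k, ∃ C : ℝ, ∀ s : ℝ, 0 ≤ s → Mlow k s ≤ C)
    (T That : Fin d → ℝ → ℝ)
    (hTmono : ∀ k, Monotone (T k)) (hThatmono : ∀ k, Monotone (That k))
    (hT0 : ∀ k, ∀ t : ℝ, t ≤ 0 → T k t = 0) (hThat0 : ∀ k, ∀ t : ℝ, t ≤ 0 → That k t = 0)
    (hTsum : ∀ t : ℝ, 0 ≤ t → ∑ k, T k t = t)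
    (hThatsum : ∀ t : ℝ, 0 ≤ t → ∑ k, That k t = t)
    (hFTL : ∀ k, ∀ t : ℝ, 0 ≤ t → (∀ t' : ℝ, t < t' → That k t < That k t') →
      Mlow k (That k t) = ⨆ j, Mlow j (That j t))
    (ST SThat : Fin d → StieltjesFunction ℝ)
    (hST : ∀ k (s : ℝ), ST k s = T k s) (hSThat : ∀ k (s : ℝ), SThat k s = That k s) :
    ∑ k, ∫⁻ t in Ici (0:ℝ),
        ENNReal.ofReal (Real.exp (-β * t) * Mlow k (T k t)) ∂(ST k).measure
      ≤ ∑ k, ∫⁻ t in Ici (0:ℝ),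
          ENNReal.ofReal (Real.exp (-β * t) * Mlow k (That k t)) ∂(SThat k).measure := by
  classical
  -- extended index functions
  set Mx : Fin d → ℝ → ℝ := fun k s => Mlow k (max s 0) with hMx
  have hMxanti : ∀ k, Antitone (Mx k) := fun k a b hab =>
    hManti k (mem_Ici.2 (le_max_right a 0)) (mem_Ici.2 (le_max_right b 0))
      (max_le_max hab le_rfl)
  have hTnn : ∀ k (t : ℝ), 0 ≤ t → 0 ≤ T k t := fun k t ht => by
    have h := hTmono k ht; rwa [hT0 k 0 le_rfl] at h
  have hThatnn : ∀ k (t : ℝ), 0 ≤ t → 0 ≤ That k t := fun k t ht => by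
    have h := hThatmono k ht; rwa [hThat0 k 0 le_rfl] at h
  have hMxT : ∀ k (t : ℝ), 0 ≤ t → Mx k (T k t) = Mlow k (T k t) := fun k t ht => by
    show Mlow k (max (T k t) 0) = Mlow k (T k t)
    rw [max_eq_left (hTnn k t ht)]
  have hMxThat : ∀ k (t : ℝ), 0 ≤ t → Mx k (That k t) = Mlow k (That k t) := fun k t ht => by
    show Mlow k (max (That k t) 0) = Mlow k (That k t)
    rw [max_eq_left (hThatnn k t ht)]
  -- Lipschitz continuity of allocation components
  have LIP : ∀ (U : Fin d → ℝ → ℝ), (∀ k, Monotone (U k)) → (∀ k (t : ℝ), t ≤ 0 → U k t = 0) →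
      (∀ t : ℝ, 0 ≤ t → ∑ k, U k t = t) → ∀ k, LipschitzWith 1 (U k) := by
    intro U hmono h0 hsum k
    have hnn : ∀ j (t : ℝ), 0 ≤ t → 0 ≤ U j t := fun j t ht => by
      have h := hmono j ht; rwa [h0 j 0 le_rfl] at h
    have key : ∀ s t : ℝ, s ≤ t → U k t - U k s ≤ t - s := by
      intro s t hst
      rcases le_or_gt 0 s with hs | hs
      · have h1 : U k t - U k s ≤ ∑ j, (U j t - U j s) := by
          refine Finset.single_le_sum (f := fun j => U j t - U j s) ?_ (Finset.mem_univ k)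
          intro j _; exact sub_nonneg.2 (hmono j hst)
        rwa [Finset.sum_sub_distrib, hsum t (hs.trans hst), hsum s hs] at h1
      · rcases le_or_gt t 0 with ht | ht
        · rw [h0 k t ht, h0 k s hs.le]; linarith
        · have h1 : U k t ≤ ∑ j, U j t := by
            refine Finset.single_le_sum (f := fun j => U j t) ?_ (Finset.mem_univ k)
            intro j _; exact hnn j t ht.le
          rw [hsum t ht.le] at h1
          rw [h0 k s hs.le]; linarith
    refine LipschitzWith.of_dist_le_mul fun a b => ?_
    rw [NNReal.coe_one, one_mul, Real.dist_eq, Real.dist_eq]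
    rcases le_total a b with h | h
    · have h1 := key a b h
      have h2 : 0 ≤ U k b - U k a := sub_nonneg.2 (hmono k h)
      rw [abs_sub_comm, abs_of_nonneg h2, abs_sub_comm (a := a), abs_of_nonneg (sub_nonneg.2 h)]
      linarith
    · have h1 := key b a h
      have h2 : 0 ≤ U k a - U k b := sub_nonneg.2 (hmono k h)
      rw [abs_of_nonneg h2, abs_of_nonneg (sub_nonneg.2 h)]
      linarith
  have hSTcont : ∀ k, Continuous (ST k) := by
    intro k
    have h : ⇑(ST k) = T k := funext (hST k)
    rw [h]; exact (LIP T hTmono hT0 hTsum k).continuous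
  have hSThatcont : ∀ k, Continuous (SThat k) := by
    intro k
    have h : ⇑(SThat k) = That k := funext (hSThat k)
    rw [h]; exact (LIP That hThatmono hThat0 hThatsum k).continuous
  -- sum of measures of Ico
  have SUMIco : ∀ (U : Fin d → ℝ → ℝ) (SU : Fin d → StieltjesFunction ℝ),
      (∀ k (s : ℝ), SU k s = U k s) → (∀ k, Continuous (SU k)) →
      (∀ k (t : ℝ), t ≤ 0 → U k t = 0) → (∀ t : ℝ, 0 ≤ t → ∑ k, U k t = t) →
      (∀ k, Monotone (U k)) →
      ∀ x : ℝ, 0 ≤ x → ∑ k, (SU k).measure (Ico 0 x) = ENNReal.ofReal x := by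
    intro U SU hSU hcont h0 hsum hmono x hx
    have hll : ∀ k (y : ℝ), Function.leftLim (SU k) y = SU k y := fun k y =>
      (SU k).mono.continuousWithinAt_Iio_iff_leftLim_eq.1 (hcont k).continuousWithinAt
    have h1 : ∀ k, (SU k).measure (Ico 0 x) = ENNReal.ofReal (U k x) := by
      intro k
      rw [StieltjesFunction.measure_Ico, hll, hll, hSU, hSU, h0 k 0 le_rfl, sub_zero]
    rw [Finset.sum_congr rfl fun k _ => h1 k,
      ← ENNReal.ofReal_sum_of_nonneg fun k _ => by
        have h := hmono k hx; rw [h0 k 0 le_rfl] at h; exact h,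
      hsum x hx]
  -- THE KEY INEQUALITY
  have KEY : ∀ (m x : ℝ),
      ∑ k, (ST k).measure ({t : ℝ | 0 ≤ t ∧ m < Mx k (T k t)} ∩ Iio x)
        ≤ ∑ k, (SThat k).measure ({t : ℝ | 0 ≤ t ∧ m < Mx k (That k t)} ∩ Iio x) := by
    intro m x
    rcases le_or_gt x 0 with hx | hx
    · have hempty : ∀ (U : Fin d → ℝ → ℝ) (k : Fin d),
          ({t : ℝ | 0 ≤ t ∧ m < Mx k (U k t)} ∩ Iio x) = (∅ : Set ℝ) := by
        intro U k; ext t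
        simp only [mem_inter_iff, mem_setOf_eq, mem_Iio, mem_empty_iff_false, iff_false, not_and]
        rintro ⟨h1, _⟩ h2; linarith
      have e1 : ∑ k, (ST k).measure ({t : ℝ | 0 ≤ t ∧ m < Mx k (T k t)} ∩ Iio x) = 0 :=
        Finset.sum_eq_zero fun k _ => by rw [hempty T k]; exact measure_empty
      rw [e1]; exact zero_le
    set S : Fin d → ℝ≥0∞ := fun j => ⨆ (s : ℝ) (_ : 0 ≤ s ∧ m < Mx j s), ENNReal.ofReal s
      with hS
    set σ : ℝ≥0∞ := ∑ j, S j with hσ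
    have hboundA : ∑ k, (ST k).measure ({t : ℝ | 0 ≤ t ∧ m < Mx k (T k t)} ∩ Iio x)
        ≤ ENNReal.ofReal x := by
      rw [← SUMIco T ST hST hSTcont hT0 hTsum hTmono x hx.le]
      refine Finset.sum_le_sum fun k _ => measure_mono ?_
      rintro t ⟨⟨h1, _⟩, h2⟩; exact ⟨h1, h2⟩
    have hboundB : ∑ k, (ST k).measure ({t : ℝ | 0 ≤ t ∧ m < Mx k (T k t)} ∩ Iio x) ≤ σ := by
      rw [hσ]
      refine Finset.sum_le_sum fun k _ => ?_
      refine (measure_mono inter_subset_left).trans ?_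
      refine IndexPolicyAux.measure_le_of_downward (ST k) (hSTcont k)
        (fun t ht => by rw [hST]; exact hT0 k t ht) _ (fun t ht => ht.1) ?_ (S k) ?_
      · rintro t ⟨ht0, htm⟩ s hs hst
        exact ⟨hs, lt_of_lt_of_le htm (hMxanti k (hTmono k hst))⟩
      · rintro t ⟨ht0, htm⟩
        rw [hST]
        exact le_iSup₂ (f := fun (s : ℝ) (_ : 0 ≤ s ∧ m < Mx k s) => ENNReal.ofReal s)
          (T k t) ⟨hTnn k t ht0, htm⟩
    set W := {t : ℝ | 0 ≤ t ∧ ∃ j, m < Mx j (That j t)} with hW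
    have hnull : ∀ k, (SThat k).measure (W \ {t : ℝ | 0 ≤ t ∧ m < Mx k (That k t)}) = 0 := by
      intro k
      refine measure_mono_null ?_ (IndexPolicyAux.measure_flat_null (SThat k) (hSThatcont k)
        (fun t ht => by rw [hSThat]; exact hThat0 k t ht))
      rintro t ⟨⟨ht0, j, hj⟩, htk⟩
      by_contra hN
      simp only [mem_setOf_eq, not_exists, not_and] at hN
      have hinc : ∀ t' : ℝ, t < t' → That k t < That k t' := by
        intro t' ht'
        refine lt_of_le_of_ne (hThatmono k ht'.le) fun heq => ?_
        exact hN t' ht' (by rw [hSThat, hSThat, heq])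
      have hftl := hFTL k t ht0 hinc
      have hjle : Mlow j (That j t) ≤ ⨆ i, Mlow i (That i t) :=
        le_ciSup (f := fun i => Mlow i (That i t)) (Set.finite_range _).bddAbove j
      have hj' : m < Mlow j (That j t) := by rwa [hMxThat j t ht0] at hj
      have hk' : m < Mlow k (That k t) := lt_of_lt_of_le hj' (hftl ▸ hjle)
      exact htk ⟨ht0, by rw [hMxThat k t ht0]; exact hk'⟩
    have hstep : ∀ k, (SThat k).measure (W ∩ Iio x)
        ≤ (SThat k).measure ({t : ℝ | 0 ≤ t ∧ m < Mx k (That k t)} ∩ Iio x) := by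
      intro k
      calc (SThat k).measure (W ∩ Iio x)
          ≤ (SThat k).measure (({t : ℝ | 0 ≤ t ∧ m < Mx k (That k t)} ∩ Iio x)
              ∪ (W \ {t : ℝ | 0 ≤ t ∧ m < Mx k (That k t)})) := by
            refine measure_mono ?_
            rintro t ⟨htW, htx⟩
            by_cases h : t ∈ {t : ℝ | 0 ≤ t ∧ m < Mx k (That k t)}
            · exact Or.inl ⟨h, htx⟩
            · exact Or.inr ⟨htW, h⟩
        _ ≤ (SThat k).measure ({t : ℝ | 0 ≤ t ∧ m < Mx k (That k t)} ∩ Iio x)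
              + (SThat k).measure (W \ {t : ℝ | 0 ≤ t ∧ m < Mx k (That k t)}) :=
            measure_union_le _ _
        _ = (SThat k).measure ({t : ℝ | 0 ≤ t ∧ m < Mx k (That k t)} ∩ Iio x) := by
            rw [hnull k, add_zero]
    have hWsub : ∀ t : ℝ, 0 ≤ t → ENNReal.ofReal t < σ → t ∈ W := by
      intro t ht hlt
      by_contra htW
      have hSle : ∀ j, S j ≤ ENNReal.ofReal (That j t) := by
        intro j
        refine iSup₂_le fun s hs => ENNReal.ofReal_le_ofReal ?_
        by_contra hgt
        push_neg at hgt
        exact htW ⟨ht, j, lt_of_lt_of_le hs.2 (hMxanti j hgt.le)⟩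
      have hσle : σ ≤ ENNReal.ofReal t := by
        calc σ ≤ ∑ j, ENNReal.ofReal (That j t) := Finset.sum_le_sum fun j _ => hSle j
          _ = ENNReal.ofReal (∑ j, That j t) :=
            (ENNReal.ofReal_sum_of_nonneg fun j _ => hThatnn j t ht).symm
          _ = ENNReal.ofReal t := by rw [hThatsum t ht]
      exact absurd hlt (not_lt.2 hσle)
    have hmin : min (ENNReal.ofReal x) σ ≤ ∑ k, (SThat k).measure (W ∩ Iio x) := by
      rcases eq_or_ne σ ⊤ with hσtop | hσtop
      · have h1 : Ico (0:ℝ) x ⊆ W ∩ Iio x := by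
          rintro t ⟨ht0, htx⟩
          exact ⟨hWsub t ht0 (by rw [hσtop]; exact ENNReal.ofReal_lt_top), htx⟩
        calc min (ENNReal.ofReal x) σ ≤ ENNReal.ofReal x := min_le_left _ _
          _ = ∑ k, (SThat k).measure (Ico 0 x) :=
            (SUMIco That SThat hSThat hSThatcont hThat0 hThatsum hThatmono x hx.le).symm
          _ ≤ ∑ k, (SThat k).measure (W ∩ Iio x) :=
            Finset.sum_le_sum fun k _ => measure_mono h1
      · have hσeq : ENNReal.ofReal σ.toReal = σ := ENNReal.ofReal_toReal hσtop
        have h1 : Ico (0:ℝ) (min σ.toReal x) ⊆ W ∩ Iio x := by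
          rintro t ⟨ht0, htx⟩
          have hts : t < σ.toReal := lt_of_lt_of_le htx (min_le_left _ _)
          have h2 : ENNReal.ofReal t < σ := by
            rw [← hσeq]
            exact (ENNReal.ofReal_lt_ofReal_iff (lt_of_le_of_lt ht0 hts)).2 hts
          exact ⟨hWsub t ht0 h2, lt_of_lt_of_le htx (min_le_right _ _)⟩
        have hminnn : (0:ℝ) ≤ min σ.toReal x := le_min ENNReal.toReal_nonneg hx.le
        calc min (ENNReal.ofReal x) σ = ENNReal.ofReal (min σ.toReal x) := by
              rw [Monotone.map_min (fun a b hab => ENNReal.ofReal_le_ofReal hab), hσeq, min_comm]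
          _ = ∑ k, (SThat k).measure (Ico 0 (min σ.toReal x)) :=
            (SUMIco That SThat hSThat hSThatcont hThat0 hThatsum hThatmono _ hminnn).symm
          _ ≤ ∑ k, (SThat k).measure (W ∩ Iio x) :=
            Finset.sum_le_sum fun k _ => measure_mono h1
    calc ∑ k, (ST k).measure ({t : ℝ | 0 ≤ t ∧ m < Mx k (T k t)} ∩ Iio x)
        ≤ min (ENNReal.ofReal x) σ := le_min hboundA hboundB
      _ ≤ ∑ k, (SThat k).measure (W ∩ Iio x) := hmin
      _ ≤ ∑ k, (SThat k).measure ({t : ℝ | 0 ≤ t ∧ m < Mx k (That k t)} ∩ Iio x) :=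
        Finset.sum_le_sum fun k _ => hstep k
  -- measurability for interchanges
  have ψmeas : ∀ (SU : StieltjesFunction ℝ) (U : ℝ → ℝ), Measurable U → ∀ (M : ℝ → ℝ),
      Antitone M → Measurable (fun q : ℝ × ℝ =>
        SU.measure ({t : ℝ | 0 ≤ t ∧ q.1 < M (U t)} ∩ Iio (-Real.log q.2 / β))) := by
    intro SU U hU M hM
    have hh : Measurable fun t => M (U t) := hM.measurable.comp hU
    have h1 : MeasurableSet {p : (ℝ × ℝ) × ℝ | 0 ≤ p.2} :=
      measurableSet_le measurable_const measurable_snd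
    have h2 : MeasurableSet {p : (ℝ × ℝ) × ℝ | p.1.1 < M (U p.2)} :=
      measurableSet_lt measurable_fst.fst (hh.comp measurable_snd)
    have h3 : MeasurableSet {p : (ℝ × ℝ) × ℝ | p.2 < -Real.log p.1.2 / β} :=
      measurableSet_lt measurable_snd
        (((Real.measurable_log.comp measurable_fst.snd).neg).div_const β)
    have hs : MeasurableSet {p : (ℝ × ℝ) × ℝ |
        (0 ≤ p.2 ∧ p.1.1 < M (U p.2)) ∧ p.2 < -Real.log p.1.2 / β} := by
      have heq : {p : (ℝ × ℝ) × ℝ | (0 ≤ p.2 ∧ p.1.1 < M (U p.2)) ∧ p.2 < -Real.log p.1.2 / β}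
          = ({p : (ℝ × ℝ) × ℝ | 0 ≤ p.2} ∩ {p | p.1.1 < M (U p.2)})
            ∩ {p | p.2 < -Real.log p.1.2 / β} := rfl
      rw [heq]; exact (h1.inter h2).inter h3
    have := measurable_measure_prodMk_left (ν := SU.measure) hs
    exact this
  have hmeas_u : ∀ (SU : StieltjesFunction ℝ) (B : Set ℝ),
      Measurable (fun u : ℝ => SU.measure (B ∩ Iio (-Real.log u / β))) := by
    intro SU B
    have h1 : Monotone (fun x : ℝ => SU.measure (B ∩ Iio x)) := fun a b hab =>
      measure_mono (inter_subset_inter_right _ (Iio_subset_Iio hab))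
    exact h1.measurable.comp ((Real.measurable_log.neg).div_const β)
  have hmeas_m : ∀ (SU : StieltjesFunction ℝ) (U : ℝ → ℝ), Measurable U → ∀ (M : ℝ → ℝ),
      Antitone M → Measurable (fun m : ℝ => ∫⁻ u in Ioi (0:ℝ),
        SU.measure ({t : ℝ | 0 ≤ t ∧ m < M (U t)} ∩ Iio (-Real.log u / β))) := by
    intro SU U hU M hM
    refine Measurable.lintegral_prod_right ?_
    have := ψmeas SU U hU M hM
    exact this.comp measurable_id
  -- assemble
  calc ∑ k, ∫⁻ t in Ici (0:ℝ),
        ENNReal.ofReal (Real.exp (-β * t) * Mlow k (T k t)) ∂(ST k).measure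
      = ∑ k, ∫⁻ m in Ioi (0:ℝ), ∫⁻ u in Ioi (0:ℝ),
          (ST k).measure ({t : ℝ | 0 ≤ t ∧ m < Mx k (T k t)} ∩ Iio (-Real.log u / β)) := by
        refine Finset.sum_congr rfl fun k _ => ?_
        rw [show (∫⁻ t in Ici (0:ℝ),
              ENNReal.ofReal (Real.exp (-β * t) * Mlow k (T k t)) ∂(ST k).measure)
            = ∫⁻ t in Ici (0:ℝ),
              ENNReal.ofReal (Real.exp (-β * t) * Mx k (T k t)) ∂(ST k).measure from
          setLIntegral_congr_fun measurableSet_Ici (fun t ht => by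
            rw [hMxT k t ht])]
        exact IndexPolicyAux.repr_aux β hβ (ST k) (T k) (hTmono k).measurable (Mx k) (hMxanti k)
    _ = ∫⁻ m in Ioi (0:ℝ), ∑ k, ∫⁻ u in Ioi (0:ℝ),
          (ST k).measure ({t : ℝ | 0 ≤ t ∧ m < Mx k (T k t)} ∩ Iio (-Real.log u / β)) :=
        (lintegral_finset_sum Finset.univ fun k _ =>
          hmeas_m (ST k) (T k) (hTmono k).measurable (Mx k) (hMxanti k)).symm
    _ = ∫⁻ m in Ioi (0:ℝ), ∫⁻ u in Ioi (0:ℝ), ∑ k,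
          (ST k).measure ({t : ℝ | 0 ≤ t ∧ m < Mx k (T k t)} ∩ Iio (-Real.log u / β)) := by
        refine lintegral_congr fun m => ?_
        exact (lintegral_finset_sum Finset.univ fun k _ => hmeas_u (ST k) _).symm
    _ ≤ ∫⁻ m in Ioi (0:ℝ), ∫⁻ u in Ioi (0:ℝ), ∑ k,
          (SThat k).measure ({t : ℝ | 0 ≤ t ∧ m < Mx k (That k t)} ∩ Iio (-Real.log u / β)) :=
        lintegral_mono fun m => lintegral_mono fun u => KEY m (-Real.log u / β)
    _ = ∫⁻ m in Ioi (0:ℝ), ∑ k, ∫⁻ u in Ioi (0:ℝ),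
          (SThat k).measure ({t : ℝ | 0 ≤ t ∧ m < Mx k (That k t)} ∩ Iio (-Real.log u / β)) := by
        refine lintegral_congr fun m => ?_
        exact lintegral_finset_sum Finset.univ fun k _ => hmeas_u (SThat k) _
    _ = ∑ k, ∫⁻ m in Ioi (0:ℝ), ∫⁻ u in Ioi (0:ℝ),
          (SThat k).measure ({t : ℝ | 0 ≤ t ∧ m < Mx k (That k t)} ∩ Iio (-Real.log u / β)) :=
        lintegral_finset_sum Finset.univ fun k _ =>
          hmeas_m (SThat k) (That k) (hThatmono k).measurable (Mx k) (hMxanti k)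
    _ = ∑ k, ∫⁻ t in Ici (0:ℝ),
          ENNReal.ofReal (Real.exp (-β * t) * Mlow k (That k t)) ∂(SThat k).measure := by
        refine Finset.sum_congr rfl fun k _ => ?_
        rw [← IndexPolicyAux.repr_aux β hβ (SThat k) (That k) (hThatmono k).measurable
          (Mx k) (hMxanti k)]
        exact (setLIntegral_congr_fun measurableSet_Ici (fun t ht => by
          rw [hMxThat k t ht])).symm
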